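/- For every n ≥ 1, the intersection of the kernel of the multiplication map μ with the kernel of the opposite multiplication map μ° inside M_n ⊗ M_n has dimension equal to (n²−1)². -/

import Mathlib

open TensorProduct

/-- The multiplication map `μ : Mₙ ⊗ Mₙ → Mₙ`, `a ⊗ b ↦ a * b`. -/
noncomputable def matMul (n : ℕ) :
    Matrix (Fin n) (Fin n) ℂ ⊗[ℂ] Matrix (Fin n) (Fin n) ℂ →ₗ[ℂ] Matrix (Fin n) (Fin n) ℂ :=
  LinearMap.mul' ℂ _

/-- The opposite multiplication map `μ° : Mₙ ⊗ Mₙ → Mₙ`, `a ⊗ b ↦ b * a`. -/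
noncomputable def matMulOp (n : ℕ) :
    Matrix (Fin n) (Fin n) ℂ ⊗[ℂ] Matrix (Fin n) (Fin n) ℂ →ₗ[ℂ] Matrix (Fin n) (Fin n) ℂ :=
  (LinearMap.mul' ℂ _).comp (TensorProduct.comm ℂ _ _).toLinearMap

set_option maxHeartbeats 1000000 in
open Matrix in
lemma aux_traceless (n : ℕ) (hn : 0 < n) (c : Matrix (Fin n) (Fin n) ℂ) (hc : c.trace = 0) :
    (c, (0 : Matrix (Fin n) (Fin n) ℂ)) ∈ LinearMap.range ((matMul n).prod (matMulOp n)) := by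
  classical
  set z : Fin n := ⟨0, hn⟩ with hzdef
  set E : Fin n → Fin n → Matrix (Fin n) (Fin n) ℂ := fun i j => single i j 1 with hE
  refine ⟨∑ i, ∑ j, c i j • (if i = j then E i z ⊗ₜ[ℂ] E z i - E z z ⊗ₜ[ℂ] E z z
      else E i j ⊗ₜ[ℂ] E j j), ?_⟩
  rw [map_sum]
  simp only [map_sum, _root_.map_smul, apply_ite ((matMul n).prod (matMulOp n)), map_sub]
  have hμ : ∀ a b : Matrix (Fin n) (Fin n) ℂ,
      ((matMul n).prod (matMulOp n)) (a ⊗ₜ[ℂ] b) = (a * b, b * a) := by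
    intro a b
    simp [matMul, matMulOp, LinearMap.mul'_apply]
  simp only [hμ]
  have h1 : ∀ i j : Fin n, E i j * E j j = E i j := by
    intro i j; simp [hE]
  have h2 : ∀ i j : Fin n, E i z * E z j = E i j := by
    intro i j; simp [hE]
  have h3 : ∀ i j : Fin n, i ≠ j → E j j * E i j = 0 := by
    intro i j h; simp only [hE]; exact Matrix.single_mul_single_of_ne (α := ℂ) (n := Fin n) (c := 1) (i := j) (j := j) (k := i) (h := Ne.symm h) (d := 1)
  have h12 : ∀ i j k : Fin n, E i j * E j k = E i k := by
    intro i j k; simp [hE]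
  have hterm : ∀ i j : Fin n,
      (c i j • (if i = j then ((E i z * E z i, E z i * E i z)
          - (E z z * E z z, E z z * E z z)) else ((E i j * E j j, E j j * E i j)))
        : Matrix (Fin n) (Fin n) ℂ × Matrix (Fin n) (Fin n) ℂ)
      = (c i j • E i j - (if i = j then c i j • E z z else 0), 0) := by
    intro i j
    rcases eq_or_ne i j with rfl | h
    · simp only [h12, if_pos rfl, Prod.mk_sub_mk, sub_self, if_true, ite_true,
        Prod.smul_mk, smul_sub, smul_zero]
    · simp only [h1, h3 _ _ h, if_neg h, Prod.smul_mk, smul_zero, sub_zero]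
  simp only [hterm]
  have hA : (∑ i, ∑ j, (c i j • E i j)) = c := by
    conv_rhs => rw [matrix_eq_sum_single c]
    simp [hE]
  have hB : (∑ i : Fin n, ∑ j : Fin n, (if i = j then c i j • E z z else (0 : Matrix (Fin n) (Fin n) ℂ))) = 0 := by
    have hrow : ∀ i : Fin n, (∑ j : Fin n, if i = j then c i j • E z z else (0 : Matrix (Fin n) (Fin n) ℂ)) = c i i • E z z := by
      intro i; simp
    rw [Finset.sum_congr rfl fun i _ => hrow i, ← Finset.sum_smul]
    have htr : (∑ i, c i i) = c.trace := by simp [Matrix.trace]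
    rw [htr, hc, zero_smul]
  refine Prod.ext ?_ ?_
  · simp only [Prod.fst_sum, Prod.fst_sub]
    simp only [Finset.sum_sub_distrib, hA, hB, sub_zero]
  · simp only [Prod.snd_sum]; simp

set_option maxHeartbeats 1000000 in
open Matrix in
theorem stmt1 (n : ℕ) (hn : 1 ≤ n) :
    Module.finrank ℂ ↥(LinearMap.ker (matMul n) ⊓ LinearMap.ker (matMulOp n)) =
      (n ^ 2 - 1) ^ 2 := by
  classical
  set Φ := (matMul n).prod (matMulOp n) with hΦ
  have hkerΦ : LinearMap.ker (matMul n) ⊓ LinearMap.ker (matMulOp n) = LinearMap.ker Φ :=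
    (LinearMap.ker_prod _ _).symm
  set T : (Matrix (Fin n) (Fin n) ℂ × Matrix (Fin n) (Fin n) ℂ) →ₗ[ℂ] ℂ :=
    (Matrix.traceLinearMap (Fin n) ℂ ℂ).comp (LinearMap.fst ℂ _ _)
      - (Matrix.traceLinearMap (Fin n) ℂ ℂ).comp (LinearMap.snd ℂ _ _) with hT
  have hrange : LinearMap.range Φ = LinearMap.ker T := by
    apply le_antisymm
    · rintro _ ⟨t, rfl⟩
      simp only [LinearMap.mem_ker]
      induction t using TensorProduct.induction_on with
      | zero => simp
      | tmul a b =>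
        have hab : Φ (a ⊗ₜ b) = (a * b, b * a) := by
          simp [hΦ, matMul, matMulOp, LinearMap.mul'_apply]
        rw [hab, hT]
        simp [Matrix.trace_mul_comm a b]
      | add x y hx hy => simp [map_add, hx, hy]
    · rintro ⟨x, y⟩ hxy
      have hxy' : x.trace = y.trace := by
        simpa [hT, sub_eq_zero] using hxy
      have h1 : ((y : Matrix (Fin n) (Fin n) ℂ), y) ∈ LinearMap.range Φ :=
        ⟨y ⊗ₜ 1, by simp [hΦ, matMul, matMulOp]⟩
      have h2 := aux_traceless n hn (x - y) (by simp [hxy'])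
      have hxy2 : (x, y) = ((x - y, 0) : _ × _) + (y, y) := by
        simp
      rw [hxy2]
      exact Submodule.add_mem _ h2 h1
  have hT_surj : Function.Surjective T := by
    intro a
    refine ⟨(a • Matrix.single (⟨0, hn⟩ : Fin n) ⟨0, hn⟩ 1, 0), ?_⟩
    simp [hT]
  have h4 := LinearMap.finrank_range_add_finrank_ker Φ
  have h5 := LinearMap.finrank_range_add_finrank_ker T
  have hrangeT : LinearMap.range T = ⊤ := LinearMap.range_eq_top.mpr hT_surj
  rw [hrangeT] at h5
  rw [finrank_top, Module.finrank_self] at h5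
  rw [Module.finrank_prod, Module.finrank_matrix, Fintype.card_fin, Module.finrank_self, mul_one] at h5
  rw [hrange] at h4
  rw [Module.finrank_tensorProduct, Module.finrank_matrix, Fintype.card_fin, Module.finrank_self, mul_one] at h4
  obtain ⟨k, hk⟩ : ∃ k, n * n = k + 1 :=
    ⟨n * n - 1, by have := Nat.one_le_iff_ne_zero.mp hn; nlinarith [Nat.sub_add_cancel (Nat.one_le_iff_ne_zero.mpr (by positivity : n*n ≠ 0) : 1 ≤ n*n)]⟩
  rw [hkerΦ]
  have hgoal : (n ^ 2 - 1) ^ 2 = k * k := by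
    have : n ^ 2 = k + 1 := by rw [sq]; exact hk
    rw [this]; simp [sq]
  rw [hgoal]
  rw [hk] at h4 h5
  have hx : (k + 1) * (k + 1) = k * k + (2 * k + 1) := by ring
  rw [hx] at h4
  linarith
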